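/- arXiv:1606.00974 — 3 statements merged into one kernel-verified Lean document; each statement's English description precedes it below -/
import Mathlib

section
/- Let f : Fin m → Sym2 V be a multigraph on a finite vertex set V with |V| = n that is decodable (q even sense), and suppose u_b = b(n+1) + n − 2m + 1. Let α be the number of vertices v with incidence degree d_I(v) = b, β the number of vertices with d_I(v) ≥ b + 2, and L the number of loop indices. Then β = 0 and either (1) α = b(n+1) + n − 2m and L = b, or (2) α = b(n+1) + n − 2m + 1 and L = b + 1. -/
/-- The underlying simple graph of the sub-multigraph of `f : ι → Sym2 V` on the
edge-index set `S`. -/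
def mGraph {V ι : Type*} (f : ι → Sym2 V) (S : Set ι) : SimpleGraph V :=
  SimpleGraph.fromRel (fun a b => ∃ i ∈ S, f i = s(a, b))

/-- Decodability (over `GF(q)` with `q` even): every connected component of the underlying
simple graph contains a vertex carrying a loop. -/
def DecodEven {V ι : Type*} (f : ι → Sym2 V) (S : Set ι) : Prop :=
  ∀ v : V, ∃ w : V, (mGraph f S).Reachable v w ∧ ∃ i ∈ S, f i = s(w, w)

/-- `uCount f x` is the number of `x`-element subsets `D` of the edge-index set whose
deletion leaves an undecodable (`q` even sense) sub-multigraph. -/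
noncomputable def uCount {V ι : Type*} [Fintype ι] (f : ι → Sym2 V) (x : ℕ) : ℕ :=
  Nat.card {D : Finset ι // D.card = x ∧ ¬ DecodEven f ((↑D : Set ι)ᶜ)}

/-- `bCut f` is the least `x` with `uCount f x > 0`. -/
noncomputable def bCut {V ι : Type*} [Fintype ι] (f : ι → Sym2 V) : ℕ :=
  sInf {x : ℕ | 0 < uCount f x}

/-- The incidence degree of a vertex `v`: the number of edge indices `i` with `v ∈ f i`
(a loop at `v` contributes one). -/
noncomputable def incDeg {V ι : Type*} (f : ι → Sym2 V) (v : V) : ℕ :=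
  Nat.card {i : ι // v ∈ f i}

section Aux

variable {V : Type*}

private lemma walk_mem' {G : SimpleGraph V} {T : Set V}
    (hT : ∀ u ∈ T, ∀ y, G.Adj u y → y ∈ T) :
    ∀ {v x : V}, G.Walk v x → v ∈ T → x ∈ T
  | _, _, SimpleGraph.Walk.nil, hv => hv
  | _, _, SimpleGraph.Walk.cons h p, hv => walk_mem' hT p (hT _ hv _ h)

private lemma reach_mem {G : SimpleGraph V} {T : Set V}
    (hT : ∀ u ∈ T, ∀ y, G.Adj u y → y ∈ T) {v x : V}
    (hv : v ∈ T) (h : G.Reachable v x) : x ∈ T := by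
  obtain ⟨p⟩ := h
  exact walk_mem' hT p hv

private lemma mGraph_adj {ι : Type*} {f : ι → Sym2 V} {S : Set ι} {a b : V}
    (h : (mGraph f S).Adj a b) : a ≠ b ∧ ∃ i ∈ S, f i = s(a, b) := by
  rw [mGraph, SimpleGraph.fromRel_adj] at h
  obtain ⟨hne, h | ⟨i, hi, hfi⟩⟩ := h
  · exact ⟨hne, h⟩
  · exact ⟨hne, i, hi, hfi.trans Sym2.eq_swap⟩

private lemma arith_final (k b n m a β L U : ℤ)
    (h1 : k + n + β + L ≤ 2 * m + a) (h2 : b ≤ L) (h3 : a ≤ U)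
    (h4 : L = b → a + 1 ≤ U) (h5 : U = k + b + n - 2 * m + 1) (hβ : 0 ≤ β) :
    β = 0 ∧ ((a = k + b + n - 2 * m ∧ L = b) ∨ (a = k + b + n - 2 * m + 1 ∧ L = b + 1)) := by
  omega

end Aux

/-- Let `f` be a decodable (`q` even sense) multigraph with `m` edges on
`n` vertices satisfying `u_b = b(n+1) + n − 2m + 1`. With `α` the number of vertices of
incidence degree `b`, `β` the number of vertices of incidence degree at least `b + 2`, and
`L` the number of loops, one has `β = 0` and either `α = b(n+1) + n − 2m` with `L = b`, or
`α = b(n+1) + n − 2m + 1` with `L = b + 1`. -/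
theorem uCount_bCut_eq_lower_bound_structure {V : Type*} [Fintype V] {m n : ℕ}
    (f : Fin m → Sym2 V) (hn : Fintype.card V = n) (hdec : DecodEven f Set.univ)
    (b α β L : ℕ) (hb : b = bCut f)
    (hu : (uCount f b : ℤ) = b * (n + 1) + n - 2 * m + 1)
    (hα : Nat.card {v : V // incDeg f v = b} = α)
    (hβ : Nat.card {v : V // b + 2 ≤ incDeg f v} = β)
    (hL : Nat.card {i : Fin m // (f i).IsDiag} = L) :
    β = 0 ∧
      (((α : ℤ) = b * (n + 1) + n - 2 * m ∧ L = b) ∨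
        ((α : ℤ) = b * (n + 1) + n - 2 * m + 1 ∧ L = b + 1)) := by
  classical
  -- Case `n = 0`.
  by_cases hn0 : n = 0
  · exfalso
    have hVempty : IsEmpty V := Fintype.card_eq_zero_iff.mp (by rw [hn, hn0])
    have hdecAll : ∀ S : Set (Fin m), DecodEven f S := fun S v => (hVempty.elim v)
    have hu0 : ∀ x, uCount f x = 0 := by
      intro x
      rw [uCount]
      have : IsEmpty {D : Finset (Fin m) // D.card = x ∧ ¬ DecodEven f ((↑D : Set (Fin m))ᶜ)} :=
        ⟨fun ⟨D, _, hD⟩ => hD (hdecAll _)⟩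
      exact Nat.card_of_isEmpty
    have hb0 : b = 0 := by
      rw [hb, bCut]
      have : {x : ℕ | 0 < uCount f x} = ∅ := by
        ext x; simp [hu0]
      rw [this, Nat.sInf_empty]
    rw [hu0 b, hb0, hn0] at hu
    push_cast at hu
    omega
  -- Case `n = 1`.
  by_cases hn1 : n = 1
  · exfalso
    have hcard1 : Fintype.card V = 1 := by rw [hn, hn1]
    obtain ⟨v0, hv0⟩ := Fintype.card_eq_one_iff.mp hcard1
    have hfe : ∀ i, f i = s(v0, v0) := by
      intro i
      have : ∀ e : Sym2 V, e = s(v0, v0) := by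
        intro e
        induction e using Sym2.ind with
        | _ a c => rw [hv0 a, hv0 c]
      exact this (f i)
    -- undecodable sets of size `< m` don't exist
    have hux : ∀ x, x < m → uCount f x = 0 := by
      intro x hx
      rw [uCount]
      have : IsEmpty {D : Finset (Fin m) // D.card = x ∧ ¬ DecodEven f ((↑D : Set (Fin m))ᶜ)} := by
        constructor
        rintro ⟨D, hDc, hDn⟩
        apply hDn
        have hne : ∃ i : Fin m, i ∉ D := by
          by_contra hcon
          push_neg at hcon
          have : D = Finset.univ := Finset.eq_univ_iff_forall.mpr hcon
          rw [this, Finset.card_univ, Fintype.card_fin] at hDc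
          omega
        obtain ⟨i, hi⟩ := hne
        intro v
        refine ⟨v, ⟨SimpleGraph.Walk.nil⟩, i, by simpa using hi, ?_⟩
        rw [hfe i, hv0 v]
      exact Nat.card_of_isEmpty
    have hum : 0 < uCount f m := by
      rw [uCount]
      have hne : Nonempty {D : Finset (Fin m) // D.card = m ∧ ¬ DecodEven f ((↑D : Set (Fin m))ᶜ)} := by
        refine ⟨⟨Finset.univ, by simp, ?_⟩⟩
        intro hdd
        obtain ⟨w, _, i, hiS, _⟩ := hdd v0
        simp at hiS
      exact Nat.card_pos
    have hbm : b = m := by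
      have h1 : b ≤ m := by
        rw [hb]; exact Nat.sInf_le hum
      have h2 : 0 < uCount f b := by
        rw [hb]; exact Nat.sInf_mem (⟨m, hum⟩ : Set.Nonempty {x : ℕ | 0 < uCount f x})
      by_contra hcon
      have hlt : b < m := lt_of_le_of_ne h1 hcon
      rw [hux b hlt] at h2
      omega
    have hub1 : uCount f b ≤ 1 := by
      rw [uCount, hbm]
      have hsub : Subsingleton {D : Finset (Fin m) //
          D.card = m ∧ ¬ DecodEven f ((↑D : Set (Fin m))ᶜ)} := by
        constructor
        rintro ⟨D1, h1, _⟩ ⟨D2, h2, _⟩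
        have e1 : D1 = Finset.univ := by
          rw [← Finset.card_eq_iff_eq_univ, Fintype.card_fin]; exact h1
        have e2 : D2 = Finset.univ := by
          rw [← Finset.card_eq_iff_eq_univ, Fintype.card_fin]; exact h2
        exact Subtype.ext (e1.trans e2.symm)
      rcases isEmpty_or_nonempty {D : Finset (Fin m) //
          D.card = m ∧ ¬ DecodEven f ((↑D : Set (Fin m))ᶜ)} with h | h
      · rw [Nat.card_of_isEmpty]; omega
      · haveI : Unique {D : Finset (Fin m) //
            D.card = m ∧ ¬ DecodEven f ((↑D : Set (Fin m))ᶜ)} :=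
          uniqueOfSubsingleton h.some
        rw [Nat.card_unique]
    rw [hn1] at hu
    omega
  -- Main case : `n ≥ 2`.
  have hn2 : 2 ≤ n := by omega
  have hV1 : Nonempty V := by
    rw [← Fintype.card_pos_iff, hn]; omega
  set Nv : V → Finset (Fin m) := fun v => Finset.univ.filter (fun i => v ∈ f i) with hNvdef
  have hNvmem : ∀ v (i : Fin m), i ∈ Nv v ↔ v ∈ f i := by
    intro v i; simp [hNvdef]
  have hNcard : ∀ v, (Nv v).card = incDeg f v := by
    intro v
    rw [incDeg, Nat.card_eq_fintype_card, Fintype.card_subtype]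
  set Dl : Finset (Fin m) := Finset.univ.filter (fun i => (f i).IsDiag) with hDldef
  have hDlmem : ∀ i : Fin m, i ∈ Dl ↔ (f i).IsDiag := by
    intro i; simp [hDldef]
  have hDlcard : Dl.card = L := by
    rw [← hL, Nat.card_eq_fintype_card, Fintype.card_subtype]
  -- complements of incidence sets are undecodable
  have hNundec : ∀ v : V, ¬ DecodEven f ((↑(Nv v) : Set (Fin m))ᶜ) := by
    intro v hdecv
    obtain ⟨w, hr, i, hiS, hfi⟩ := hdecv v
    have hclosed : ∀ u ∈ ({v} : Set V), ∀ y,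
        (mGraph f ((↑(Nv v) : Set (Fin m))ᶜ)).Adj u y → y ∈ ({v} : Set V) := by
      intro u hu y hadj
      obtain ⟨hne, j, hjS, hfj⟩ := mGraph_adj hadj
      rw [Set.mem_singleton_iff] at hu
      subst hu
      exfalso
      exact hjS (by simpa [hNvmem] using (hfj ▸ Sym2.mem_mk_left u y : u ∈ f j))
    have hw : w ∈ ({v} : Set V) := reach_mem hclosed rfl hr
    rw [Set.mem_singleton_iff] at hw
    subst hw
    exact hiS (by simpa [hNvmem] using (hfi ▸ Sym2.mem_mk_left w w : w ∈ f i))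
  -- `b` is at most every incidence degree
  have hbLe : ∀ v : V, b ≤ incDeg f v := by
    intro v
    rw [hb]
    refine Nat.sInf_le ?_
    show 0 < uCount f (incDeg f v)
    rw [uCount]
    have : Nonempty {D : Finset (Fin m) //
        D.card = incDeg f v ∧ ¬ DecodEven f ((↑D : Set (Fin m))ᶜ)} :=
      ⟨⟨Nv v, hNcard v, hNundec v⟩⟩
    exact Nat.card_pos
  -- removing all loops is undecodable, so `b ≤ L`
  have hLundec : ¬ DecodEven f ((↑Dl : Set (Fin m))ᶜ) := by
    intro hdd
    obtain ⟨v0⟩ := hV1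
    obtain ⟨w, _, i, hiS, hfi⟩ := hdd v0
    exact hiS (by simpa [hDlmem] using (by rw [hfi]; exact Sym2.mk_isDiag_iff.mpr rfl : (f i).IsDiag))
  have hbL : b ≤ L := by
    rw [hb]
    refine Nat.sInf_le ?_
    show 0 < uCount f L
    rw [uCount]
    have : Nonempty {D : Finset (Fin m) // D.card = L ∧ ¬ DecodEven f ((↑D : Set (Fin m))ᶜ)} :=
      ⟨⟨Dl, hDlcard, hLundec⟩⟩
    exact Nat.card_pos
  -- incidence sets of distinct vertices are distinct
  have hNvinj : ∀ v w : V, Nv v = Nv w → v = w := by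
    intro v w hvw
    by_contra hne
    have hkey : ∀ i : Fin m, i ∈ Nv v → f i = s(v, w) := by
      intro i hi
      have hvi : v ∈ f i := (hNvmem v i).mp hi
      have hwi : w ∈ f i := (hNvmem w i).mp (hvw ▸ hi)
      exact Sym2.eq_of_ne_mem hne hvi hwi (Sym2.mem_mk_left v w) (Sym2.mem_mk_right v w)
    have hclosed : ∀ u ∈ ({v, w} : Set V), ∀ y,
        (mGraph f Set.univ).Adj u y → y ∈ ({v, w} : Set V) := by
      intro u hu y hadj
      obtain ⟨hne', i, _, hfi⟩ := mGraph_adj hadj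
      rcases hu with hu | hu
      · rw [hu] at hfi
        have hiv : i ∈ Nv v := (hNvmem v i).mpr (by rw [hfi]; exact Sym2.mem_mk_left v y)
        have h2 : s(v, y) = s(v, w) := hfi.symm.trans (hkey i hiv)
        right
        rw [Set.mem_singleton_iff]
        exact Sym2.congr_right.mp h2
      · rw [Set.mem_singleton_iff] at hu
        rw [hu] at hfi
        have hiw : i ∈ Nv w := (hNvmem w i).mpr (by rw [hfi]; exact Sym2.mem_mk_left w y)
        have hiv : i ∈ Nv v := by rw [hvw]; exact hiw
        have h2 : s(w, y) = s(w, v) := hfi.symm.trans ((hkey i hiv).trans Sym2.eq_swap)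
        left
        exact Sym2.congr_right.mp h2
    obtain ⟨x, hrx, i, _, hfi⟩ := hdec v
    have hx : x ∈ ({v, w} : Set V) := reach_mem hclosed (Set.mem_insert v _) hrx
    have hiNv : i ∈ Nv v := by
      rcases hx with hx | hx
      · exact (hNvmem v i).mpr (by rw [hfi, hx]; exact Sym2.mem_mk_left v v)
      · rw [Set.mem_singleton_iff] at hx
        rw [hvw]
        exact (hNvmem w i).mpr (by rw [hfi, hx]; exact Sym2.mem_mk_left w w)
    have hdiagi : (f i).IsDiag := by rw [hfi]; exact Sym2.mk_isDiag_iff.mpr rfl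
    rw [hkey i hiNv, Sym2.mk_isDiag_iff] at hdiagi
    exact hne hdiagi
  -- when `L = b`, the loop set differs from every minimal incidence set
  have hNvne : ∀ v : V, Nv v ≠ Dl := by
    intro v heq
    obtain ⟨w, hwv⟩ := Fintype.exists_ne_of_one_lt_card (by rw [hn]; omega) v
    obtain ⟨x, hrx, i, _, hfi⟩ := hdec w
    have hdiagi : (f i).IsDiag := by rw [hfi]; exact Sym2.mk_isDiag_iff.mpr rfl
    have hiNv : i ∈ Nv v := heq ▸ ((hDlmem i).mpr hdiagi)
    have hvfi : v ∈ f i := (hNvmem v i).mp hiNv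
    have hxv : x = v := by
      rw [hfi] at hvfi
      rcases Sym2.mem_iff.mp hvfi with h | h <;> exact h.symm
    subst hxv
    have hclosed : ∀ u ∈ ({x} : Set V), ∀ y,
        (mGraph f Set.univ).Adj u y → y ∈ ({x} : Set V) := by
      intro u hu y hadj
      obtain ⟨hne', j, _, hfj⟩ := mGraph_adj hadj
      rw [Set.mem_singleton_iff] at hu
      subst hu
      exfalso
      have hjNv : j ∈ Nv u := (hNvmem u j).mpr (hfj ▸ Sym2.mem_mk_left u y)
      have hjD : (f j).IsDiag := (hDlmem j).mp (heq ▸ hjNv)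
      rw [hfj, Sym2.mk_isDiag_iff] at hjD
      exact hne' hjD
    have : w ∈ ({x} : Set V) := reach_mem hclosed rfl hrx.symm
    rw [Set.mem_singleton_iff] at this
    exact hwv this
  -- counting: `α ≤ uCount f b`, and `α + 1 ≤ uCount f b` when `L = b`
  have hαU : α ≤ uCount f b := by
    rw [← hα, uCount]
    refine Nat.card_le_card_of_injective
      (fun v : {v : V // incDeg f v = b} =>
        (⟨Nv v.1, by rw [hNcard]; exact v.2, hNundec v.1⟩ :
          {D : Finset (Fin m) // D.card = b ∧ ¬ DecodEven f ((↑D : Set (Fin m))ᶜ)})) ?_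
    rintro ⟨v, hv⟩ ⟨w, hw⟩ h
    simp only [Subtype.mk.injEq] at h
    exact Subtype.ext (hNvinj v w h)
  have hαU1 : L = b → α + 1 ≤ uCount f b := by
    intro hLb
    have hinj : Function.Injective
        (fun z : {v : V // incDeg f v = b} ⊕ Unit =>
          (match z with
            | Sum.inl v => ⟨Nv v.1, by rw [hNcard]; exact v.2, hNundec v.1⟩
            | Sum.inr _ => ⟨Dl, by rw [hDlcard]; exact hLb, hLundec⟩ :
            {D : Finset (Fin m) // D.card = b ∧ ¬ DecodEven f ((↑D : Set (Fin m))ᶜ)})) := by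
      rintro (⟨v, hv⟩ | ⟨⟩) (⟨w, hw⟩ | ⟨⟩) h <;> simp only [Subtype.mk.injEq] at h
      · exact congrArg Sum.inl (Subtype.ext (hNvinj v w h))
      · exact absurd h (hNvne v)
      · exact absurd h.symm (hNvne w)
      · rfl
    have hle := Nat.card_le_card_of_injective _ hinj
    rw [Nat.card_sum, Nat.card_eq_fintype_card (α := {v : V // incDeg f v = b}),
      Nat.card_eq_fintype_card (α := Unit)] at hle
    simp only [Fintype.card_unit] at hle
    rw [← hα, Nat.card_eq_fintype_card, uCount]
    exact hle
  -- handshake: `∑ v, incDeg f v + L = 2 * m`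
  have key2 : ∀ e : Sym2 V,
      (Finset.univ.filter (fun v => v ∈ e)).card + (if e.IsDiag then 1 else 0) = 2 := by
    intro e
    induction e using Sym2.ind with
    | _ a c =>
      have hset : Finset.univ.filter (fun v => v ∈ s(a, c)) = {a, c} := by
        ext v; simp [Sym2.mem_iff]
      rw [hset]
      simp only [Sym2.mk_isDiag_iff]
      by_cases hac : a = c
      · subst hac; simp
      · rw [Finset.card_pair hac, if_neg hac]
    
  have handshake : (∑ v : V, incDeg f v) + L = 2 * m := by
    have h1 : ∑ v : V, incDeg f v = ∑ i : Fin m, (Finset.univ.filter (fun v => v ∈ f i)).card := by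
      calc ∑ v : V, incDeg f v
          = ∑ v : V, ∑ i : Fin m, (if v ∈ f i then 1 else 0) := by
            refine Finset.sum_congr rfl fun v _ => ?_
            rw [← hNcard v]
            exact Finset.card_filter _ _
        _ = ∑ i : Fin m, ∑ v : V, (if v ∈ f i then 1 else 0) := Finset.sum_comm
        _ = ∑ i : Fin m, (Finset.univ.filter (fun v => v ∈ f i)).card := by
            refine Finset.sum_congr rfl fun i _ => (Finset.card_filter _ _).symm
    have h2 : L = ∑ i : Fin m, (if (f i).IsDiag then 1 else 0) := by
      rw [← hDlcard]
      exact Finset.card_filter _ _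
    rw [h1, h2, ← Finset.sum_add_distrib,
      Finset.sum_congr rfl (fun i _ => key2 (f i)), Finset.sum_const, Finset.card_univ,
      Fintype.card_fin, smul_eq_mul, mul_comm]
  -- degree-sum inequality
  have hαs : α = ∑ v : V, (if incDeg f v = b then 1 else 0) := by
    rw [← hα, Nat.card_eq_fintype_card, Fintype.card_subtype]
    exact Finset.card_filter _ _
  have hβs : β = ∑ v : V, (if b + 2 ≤ incDeg f v then 1 else 0) := by
    rw [← hβ, Nat.card_eq_fintype_card, Fintype.card_subtype]
    exact Finset.card_filter _ _
  have hdegsum : (b + 1) * n + β ≤ (∑ v : V, incDeg f v) + α := by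
    have pointwise : ∀ v : V,
        (b + 1) + (if b + 2 ≤ incDeg f v then 1 else 0) ≤
          incDeg f v + (if incDeg f v = b then 1 else 0) := by
      intro v
      have := hbLe v
      split_ifs <;> omega
    calc (b + 1) * n + β
        = ∑ v : V, ((b + 1) + if b + 2 ≤ incDeg f v then 1 else 0) := by
          rw [hβs, Finset.sum_add_distrib, Finset.sum_const, Finset.card_univ, hn,
            smul_eq_mul, mul_comm]
      _ ≤ ∑ v : V, (incDeg f v + if incDeg f v = b then 1 else 0) :=
          Finset.sum_le_sum (fun v _ => pointwise v)
      _ = (∑ v : V, incDeg f v) + α := by rw [Finset.sum_add_distrib, ← hαs]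
  -- assemble the arithmetic
  have h1nat : (b + 1) * n + β + L ≤ 2 * m + α := by
    have := Nat.add_le_add_right hdegsum L
    omega
  have h1 : (b : ℤ) * n + n + β + L ≤ 2 * m + α := by
    have h := h1nat
    push_cast at h ⊢
    linarith
  have h2 : (b : ℤ) ≤ L := by exact_mod_cast hbL
  have h3 : (α : ℤ) ≤ (uCount f b : ℤ) := by exact_mod_cast hαU
  have h4 : (L : ℤ) = b → (α : ℤ) + 1 ≤ (uCount f b : ℤ) := by
    intro h
    exact_mod_cast hαU1 (by exact_mod_cast h)
  have h5 : (uCount f b : ℤ) = (b : ℤ) * n + b + n - 2 * m + 1 := by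
    rw [hu]; ring
  obtain ⟨hb0, hcase⟩ := arith_final ((b : ℤ) * n) b n m α β L (uCount f b)
    h1 h2 h3 h4 h5 (by positivity)
  constructor
  · exact_mod_cast hb0
  · rcases hcase with ⟨ha, hl⟩ | ⟨ha, hl⟩
    · left
      exact ⟨by rw [ha]; ring, by exact_mod_cast hl⟩
    · right
      exact ⟨by rw [ha]; ring, by exact_mod_cast hl⟩
end

section
/- Let f : Fin m → Sym2 V be a multigraph on a finite vertex set V with |V| = n that is decodable (q even sense) and satisfies u_b = b(n+1) + n − 2m + 1. Let θ = b(n+1) + n − 2m, let Ω be the maximum, over pairs of distinct vertices u, v, of the number of indices i with f i = s(u,v), and let Δ_L be the maximum, over vertices v, of the number of indices i with f i = s(v,v). Then for every y with 1 ≤ y ≤ b − max(Ω, Δ_L) − 1, u_{b+y} ≥ (θ + 1)·C(m−b, y) + (n − θ)·C(m−b−1, y−1). -/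
section Aux

variable {V ι : Type*}

lemma decodEven_mono (f : ι → Sym2 V) {S T : Set ι} (hST : S ⊆ T)
    (h : DecodEven f S) : DecodEven f T := by
  have hG : mGraph f S ≤ mGraph f T := by
    intro a b hab
    rw [mGraph, SimpleGraph.fromRel_adj] at hab ⊢
    obtain ⟨hne, h'⟩ := hab
    refine ⟨hne, ?_⟩
    rcases h' with ⟨i, hi, hfi⟩ | ⟨i, hi, hfi⟩
    · exact Or.inl ⟨i, hST hi, hfi⟩
    · exact Or.inr ⟨i, hST hi, hfi⟩
  intro v
  obtain ⟨w, hr, i, hi, hfi⟩ := h v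
  exact ⟨w, hr.mono hG, i, hST hi, hfi⟩

lemma reachable_eq_self {G : SimpleGraph V} {v w : V}
    (h : ∀ x, ¬ G.Adj v x) (hr : G.Reachable v w) : w = v := by
  obtain ⟨p⟩ := hr
  cases p with
  | nil => rfl
  | cons h' _ => exact absurd h' (h _)

lemma sym2_eq_diag_of_mem {e : Sym2 V} {v : V} (h1 : v ∈ e) (h2 : e.IsDiag) :
    e = s(v, v) := by
  induction e using Sym2.ind with
  | _ a b =>
    rw [Sym2.mk_isDiag_iff] at h2
    rw [Sym2.mem_iff] at h1
    rcases h1 with rfl | rfl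
    · rw [h2]
    · rw [h2]

end Aux

open Classical in
noncomputable def starF {V : Type*} [Fintype V] {m : ℕ} (f : Fin m → Sym2 V) :
    Option V → Finset (Fin m)
  | some v => Finset.univ.filter (fun i => v ∈ f i)
  | none => Finset.univ.filter (fun i => (f i).IsDiag)

section Star

variable {V : Type*} [Fintype V] {m : ℕ} (f : Fin m → Sym2 V)

lemma mem_starF_some {v : V} {i : Fin m} : i ∈ starF f (some v) ↔ v ∈ f i := by
  simp [starF]

lemma mem_starF_none {i : Fin m} : i ∈ starF f none ↔ (f i).IsDiag := by
  simp [starF]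

lemma not_decod_starF_some (v : V) :
    ¬ DecodEven f ((↑(starF f (some v)) : Set (Fin m))ᶜ) := by
  intro h
  obtain ⟨w, hr, i, hi, hfi⟩ := h v
  have hw : w = v := by
    refine reachable_eq_self (fun x hx => ?_) hr
    rw [mGraph, SimpleGraph.fromRel_adj] at hx
    obtain ⟨hne, hx⟩ := hx
    rcases hx with ⟨j, hj, hfj⟩ | ⟨j, hj, hfj⟩ <;>
    · refine hj ?_
      simp only [Set.mem_compl_iff, Finset.mem_coe, mem_starF_some, hfj] at *
      simp [hfj]
  subst hw
  refine hi ?_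
  simp only [Set.mem_compl_iff, Finset.mem_coe, mem_starF_some, not_not] at *
  simp [hfi]

lemma not_decod_starF_none [Nonempty V] :
    ¬ DecodEven f ((↑(starF f none) : Set (Fin m))ᶜ) := by
  intro h
  obtain ⟨w, _, i, hi, hfi⟩ := h (Classical.arbitrary V)
  refine hi ?_
  simp only [Set.mem_compl_iff, Finset.mem_coe, mem_starF_none, not_not]
  rw [hfi]
  exact Sym2.mk_isDiag_iff.mpr rfl

open Classical in
lemma uCount_eq_card (x : ℕ) :
    uCount f x = (Finset.univ.filter
      (fun D : Finset (Fin m) => D.card = x ∧ ¬ DecodEven f ((↑D : Set (Fin m))ᶜ))).card := by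
  classical
  rw [uCount, Nat.card_eq_fintype_card, Fintype.card_subtype]

omit [Fintype V] in
lemma nat_card_eq_filter_card (p : Fin m → Prop) [DecidablePred p] :
    Nat.card {i : Fin m // p i} = (Finset.univ.filter p).card := by
  rw [Nat.card_eq_fintype_card, Fintype.card_subtype]

lemma filter_mem_sym2_card [DecidableEq V] (e : Sym2 V) :
    (Finset.univ.filter (fun v => v ∈ e)).card = if e.IsDiag then 1 else 2 := by
  induction e using Sym2.ind with
  | _ a b =>
    have h : Finset.univ.filter (fun v => v ∈ s(a, b)) = {a, b} := by
      ext x; simp [Sym2.mem_iff]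
    rw [h]
    by_cases hab : a = b
    · subst hab; simp
    · simp [Sym2.mk_isDiag_iff, hab, Finset.card_pair hab]

lemma sum_card_starF : ∑ K : Option V, (starF f K).card = 2 * m := by
  classical
  have hS : ∀ S : Finset (Fin m), S.card = ∑ i : Fin m, (if i ∈ S then 1 else 0) := by
    intro S
    simp [Finset.sum_ite_mem]
  have h1 : ∑ K : Option V, (starF f K).card
      = ∑ i : Fin m, ∑ K : Option V, (if i ∈ starF f K then 1 else 0) := by
    rw [← Finset.sum_comm]
    exact Finset.sum_congr rfl (fun K _ => hS _)
  rw [h1]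
  have h2 : ∀ i : Fin m, ∑ K : Option V, (if i ∈ starF f K then 1 else 0) = 2 := by
    intro i
    rw [Fintype.sum_option]
    have h3 : ∑ v : V, (if i ∈ starF f (some v) then 1 else 0)
        = (Finset.univ.filter (fun v => v ∈ f i)).card := by
      rw [Finset.card_filter]
      exact Finset.sum_congr rfl (fun v _ => by simp [mem_starF_some])
    rw [h3, filter_mem_sym2_card]
    by_cases hd : (f i).IsDiag <;> simp [mem_starF_none, hd]
  rw [Finset.sum_congr rfl (fun i _ => h2 i)]
  simp [mul_comm]

lemma card_supersets (C : Finset (Fin m)) {t : ℕ} (h : C.card ≤ t) :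
    (Finset.univ.filter (fun D : Finset (Fin m) => D.card = t ∧ C ⊆ D)).card
      = (m - C.card).choose (t - C.card) := by
  classical
  have hcompl : (Cᶜ : Finset (Fin m)).card = m - C.card := by
    rw [Finset.card_compl, Fintype.card_fin]
  rw [← hcompl, ← Finset.card_powersetCard]
  refine Finset.card_bij' (fun D _ => D \ C) (fun E _ => E ∪ C) ?_ ?_ ?_ ?_
  · intro D hD
    simp only [Finset.mem_filter, Finset.mem_univ, true_and] at hD
    rw [Finset.mem_powersetCard]
    constructor
    · intro x hx
      rw [Finset.mem_sdiff] at hx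
      simp [hx.2]
    · rw [Finset.card_sdiff_of_subset hD.2, hD.1]
  · intro E hE
    rw [Finset.mem_powersetCard] at hE
    have hdisj : Disjoint E C := by
      rw [Finset.disjoint_left]
      intro x hx hxC
      have := hE.1 hx
      simp [hxC] at this
    simp only [Finset.mem_filter, Finset.mem_univ, true_and]
    constructor
    · rw [Finset.card_union_of_disjoint hdisj, hE.2, Nat.sub_add_cancel h]
    · exact Finset.subset_union_right
  · intro D hD
    simp only [Finset.mem_filter, Finset.mem_univ, true_and] at hD
    exact Finset.sdiff_union_of_subset hD.2
  · intro E hE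
    rw [Finset.mem_powersetCard] at hE
    have hdisj : Disjoint E C := by
      rw [Finset.disjoint_left]
      intro x hx hxC
      have := hE.1 hx
      simp [hxC] at this
    show (E ∪ C) \ C = E
    rw [Finset.union_sdiff_distrib, Finset.sdiff_self, Finset.union_empty,
      Finset.sdiff_eq_self_of_disjoint hdisj]

end Star


/-- Let `f` be a decodable (`q` even sense) multigraph with `m` edges on
`n` vertices satisfying `u_b = b(n+1) + n − 2m + 1`, and set `θ = b(n+1) + n − 2m`. With
`Ω` the maximum edge multiplicity between distinct vertices and `Δ_L` the maximum number
of loops at a single vertex, for every `y` with `1 ≤ y ≤ b − max(Ω, Δ_L) − 1` one has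
`u_{b+y} ≥ (θ + 1)·C(m−b, y) + (n − θ)·C(m−b−1, y−1)`. -/
theorem uCount_bCut_add_lower_bound {V : Type*} [Fintype V] {m n : ℕ}
    (f : Fin m → Sym2 V) (hn : Fintype.card V = n) (hdec : DecodEven f Set.univ)
    (b : ℕ) (hb : b = bCut f) (θ : ℤ) (hθ : θ = b * (n + 1) + n - 2 * m)
    (hu : (uCount f b : ℤ) = θ + 1)
    (Ω ΔL : ℕ)
    (hΩ : Ω = sSup {c : ℕ | ∃ u v : V, u ≠ v ∧ c = Nat.card {i : Fin m // f i = s(u, v)}})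
    (hΔL : ΔL = sSup {c : ℕ | ∃ v : V, c = Nat.card {i : Fin m // f i = s(v, v)}})
    (y : ℕ) (hy1 : 1 ≤ y) (hy2 : (y : ℤ) ≤ (b : ℤ) - max Ω ΔL - 1) :
    (θ + 1) * Nat.choose (m - b) y + ((n : ℤ) - θ) * Nat.choose (m - b - 1) (y - 1) ≤
      (uCount f (b + y) : ℤ) := by
  classical
  -- V is nonempty
  have hVne : Nonempty V := by
    by_contra hV
    rw [not_nonempty_iff] at hV
    have hu0 : ∀ x, uCount f x = 0 := by
      intro x
      rw [uCount_eq_card]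
      rw [Finset.card_eq_zero, Finset.filter_eq_empty_iff]
      intro D _
      rw [not_and, not_not]
      intro _
      exact fun v => isEmptyElim v
    have hb0 : b = 0 := by
      rw [hb, bCut]
      have : {x : ℕ | 0 < uCount f x} = ∅ := by
        ext x; simp [hu0]
      rw [this, Nat.sInf_empty]
    have hn0 : n = 0 := by rw [← hn, Fintype.card_eq_zero]
    rw [hu0] at hu
    rw [hb0, hn0] at hθ
    omega
  haveI := hVne
  set M := max Ω ΔL with hM
  have hyb : M + y + 1 ≤ b := by omega
  -- b is a lower bound for cards of undecodable sets
  have hble : ∀ (D : Finset (Fin m)), ¬ DecodEven f ((↑D : Set (Fin m))ᶜ) → b ≤ D.card := by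
    intro D hD
    have hpos : 0 < uCount f D.card := by
      rw [uCount_eq_card, Finset.card_pos]
      exact ⟨D, by simp [hD]⟩
    rw [hb]
    exact Nat.sInf_le hpos
  have hstar : ∀ K : Option V, ¬ DecodEven f ((↑(starF f K) : Set (Fin m))ᶜ) := by
    intro K
    match K with
    | some v => exact not_decod_starF_some f v
    | none => exact not_decod_starF_none f
  have hsb : ∀ K : Option V, b ≤ (starF f K).card := fun K => hble _ (hstar K)
  -- intersection bounds
  have hΩle : ∀ u v : V, u ≠ v → ((starF f (some u)) ∩ (starF f (some v))).card ≤ Ω := by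
    intro u v huv
    have hsub : starF f (some u) ∩ starF f (some v)
        ⊆ Finset.univ.filter (fun i => f i = s(u, v)) := by
      intro i hi
      rw [Finset.mem_inter, mem_starF_some, mem_starF_some] at hi
      rw [Finset.mem_filter]
      exact ⟨Finset.mem_univ i, (Sym2.mem_and_mem_iff huv).mp hi⟩
    have hbdd : BddAbove {c : ℕ | ∃ u v : V, u ≠ v ∧ c = Nat.card {i : Fin m // f i = s(u, v)}} := by
      refine ⟨m, ?_⟩
      rintro c ⟨u', v', -, rfl⟩
      calc Nat.card {i : Fin m // f i = s(u', v')} ≤ Nat.card (Fin m) :=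
            Nat.card_le_card_of_injective _ Subtype.val_injective
        _ = m := by simp
    calc (starF f (some u) ∩ starF f (some v)).card
        ≤ (Finset.univ.filter (fun i => f i = s(u, v))).card := Finset.card_le_card hsub
      _ = Nat.card {i : Fin m // f i = s(u, v)} := (nat_card_eq_filter_card _).symm
      _ ≤ Ω := by rw [hΩ]; exact le_csSup hbdd ⟨u, v, huv, rfl⟩
  have hΔle : ∀ v : V, ((starF f (some v)) ∩ (starF f none)).card ≤ ΔL := by
    intro v
    have hsub : starF f (some v) ∩ starF f none
        ⊆ Finset.univ.filter (fun i => f i = s(v, v)) := by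
      intro i hi
      rw [Finset.mem_inter, mem_starF_some, mem_starF_none] at hi
      rw [Finset.mem_filter]
      exact ⟨Finset.mem_univ i, sym2_eq_diag_of_mem hi.1 hi.2⟩
    have hbdd : BddAbove {c : ℕ | ∃ v : V, c = Nat.card {i : Fin m // f i = s(v, v)}} := by
      refine ⟨m, ?_⟩
      rintro c ⟨v', rfl⟩
      calc Nat.card {i : Fin m // f i = s(v', v')} ≤ Nat.card (Fin m) :=
            Nat.card_le_card_of_injective _ Subtype.val_injective
        _ = m := by simp
    calc (starF f (some v) ∩ starF f none).card
        ≤ (Finset.univ.filter (fun i => f i = s(v, v))).card := Finset.card_le_card hsub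
      _ = Nat.card {i : Fin m // f i = s(v, v)} := (nat_card_eq_filter_card _).symm
      _ ≤ ΔL := by rw [hΔL]; exact le_csSup hbdd ⟨v, rfl⟩
  have hinter : ∀ K K' : Option V, K ≠ K' → ((starF f K) ∩ (starF f K')).card ≤ M := by
    intro K K' hne
    match K, K' with
    | some u, some v =>
      have huv : u ≠ v := fun h => hne (by rw [h])
      exact le_trans (hΩle u v huv) (le_max_left _ _)
    | some u, none => exact le_trans (hΔle u) (le_max_right _ _)
    | none, some v =>
      rw [Finset.inter_comm]
      exact le_trans (hΔle v) (le_max_right _ _)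
    | none, none => exact absurd rfl hne
  -- injectivity
  have hinj : ∀ K K' : Option V, starF f K = starF f K' → K = K' := by
    intro K K' hKK'
    by_contra hne
    have h1 := hinter K K' hne
    rw [hKK', Finset.inter_self] at h1
    have h2 := hsb K'
    omega
  -- union bound
  have hun : ∀ K K' : Option V, K ≠ K' → b + y + 1 ≤ ((starF f K) ∪ (starF f K')).card := by
    intro K K' hne
    have h1 := Finset.card_union_add_card_inter (starF f K) (starF f K')
    have h2 := hinter K K' hne
    have h3 := hsb K
    have h4 := hsb K'
    omega
  -- cardinal bookkeeping
  have hcardOpt : (Finset.univ : Finset (Option V)).card = n + 1 := by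
    rw [Finset.card_univ, Fintype.card_option, hn]
  have hsum2m : ∑ K : Option V, (starF f K).card = 2 * m := sum_card_starF f
  set F1 := (Finset.univ.filter (fun K : Option V => b + 1 ≤ (starF f K).card)).card with hF1
  set A0 := (Finset.univ.filter (fun K : Option V => (starF f K).card = b)).card with hA0
  have hsplit : A0 + F1 = n + 1 := by
    have h := Finset.card_filter_add_card_filter_not
      (s := (Finset.univ : Finset (Option V))) (p := fun K : Option V => (starF f K).card = b)
    have h2 : Finset.univ.filter (fun K : Option V => ¬ (starF f K).card = b)
        = Finset.univ.filter (fun K : Option V => b + 1 ≤ (starF f K).card) := by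
      apply Finset.filter_congr
      intro K _
      have := hsb K
      constructor
      · intro hh; omega
      · intro hh; omega
    rw [h2, hcardOpt] at h
    rw [hA0, hF1]
    exact h
  -- slack sum
  set SS := ∑ K : Option V, ((starF f K).card - b) with hSS
  have hSSeq : SS + b * (n + 1) = 2 * m := by
    have h1 : ∑ K : Option V, (starF f K).card
        = ∑ K : Option V, (((starF f K).card - b) + b) := by
      apply Finset.sum_congr rfl
      intro K _
      have := hsb K
      omega
    rw [Finset.sum_add_distrib, Finset.sum_const, hcardOpt, smul_eq_mul] at h1
    rw [hSS, ← hsum2m, h1]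
    ring
  have hF1_le_SS : F1 ≤ SS := by
    rw [hF1, hSS, Finset.card_filter]
    apply Finset.sum_le_sum
    intro K _
    have := hsb K
    by_cases hK : b + 1 ≤ (starF f K).card <;> simp [hK] <;> omega
  have hA0_le_U : A0 ≤ uCount f b := by
    rw [hA0, uCount_eq_card]
    apply Finset.card_le_card_of_injOn (fun K => starF f K)
    · intro K hK
      rw [Finset.mem_coe, Finset.mem_filter] at hK
      rw [Finset.mem_coe, Finset.mem_filter]
      exact ⟨Finset.mem_univ _, hK.2, hstar K⟩
    · intro K _ K' _ h
      exact hinj K K' h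
  -- integer identities
  have hUz : (uCount f b : ℤ) = (n : ℤ) + 1 - SS := by
    rw [hu, hθ]
    have : (SS : ℤ) + (b : ℤ) * ((n : ℤ) + 1) = 2 * m := by exact_mod_cast hSSeq
    push_cast
    linarith
  have hA0U : A0 = uCount f b ∧ F1 = SS := by omega
  -- every star has card ≤ b + 1
  have hsle : ∀ K : Option V, (starF f K).card ≤ b + 1 := by
    intro K0
    by_contra hK0
    push_neg at hK0
    have hmem : K0 ∈ Finset.univ.filter (fun K : Option V => b + 1 ≤ (starF f K).card) :=
      Finset.mem_filter.mpr ⟨Finset.mem_univ _, by omega⟩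
    have hrest : F1 - 1 ≤ ∑ K ∈ Finset.univ.erase K0, ((starF f K).card - b) := by
      have hsub : ((Finset.univ.filter
          (fun K : Option V => b + 1 ≤ (starF f K).card)).erase K0)
          ⊆ Finset.univ.erase K0 := by
        intro K hK
        rw [Finset.mem_erase] at hK ⊢
        exact ⟨hK.1, Finset.mem_univ _⟩
      calc F1 - 1 = ((Finset.univ.filter
            (fun K : Option V => b + 1 ≤ (starF f K).card)).erase K0).card := by
            rw [Finset.card_erase_of_mem hmem]
        _ ≤ ∑ K ∈ (Finset.univ.filter
            (fun K : Option V => b + 1 ≤ (starF f K).card)).erase K0,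
              ((starF f K).card - b) := by
            rw [Finset.card_eq_sum_ones]
            apply Finset.sum_le_sum
            intro K hK
            rw [Finset.mem_erase, Finset.mem_filter] at hK
            omega
        _ ≤ ∑ K ∈ Finset.univ.erase K0, ((starF f K).card - b) :=
            Finset.sum_le_sum_of_subset hsub
    have hSSsplit : ((starF f K0).card - b) + ∑ K ∈ Finset.univ.erase K0,
        ((starF f K).card - b) = SS := by
      rw [hSS]
      exact Finset.add_sum_erase Finset.univ
        (fun K => (starF f K).card - b) (Finset.mem_univ K0)
    have hF1pos : 1 ≤ F1 := by
      rw [hF1]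
      exact Finset.card_pos.mpr ⟨K0, hmem⟩
    have := hsb K0
    omega
  -- the counting families
  have hgcard : ∀ K : Option V,
      (Finset.univ.filter (fun D : Finset (Fin m) => D.card = b + y ∧ starF f K ⊆ D)).card
        = (m - (starF f K).card).choose (b + y - (starF f K).card) := by
    intro K
    exact card_supersets _ (by have := hsle K; omega)
  have hdisj : ∀ K ∈ (Finset.univ : Finset (Option V)), ∀ K' ∈ (Finset.univ : Finset (Option V)),
      K ≠ K' → Disjoint
        (Finset.univ.filter (fun D : Finset (Fin m) => D.card = b + y ∧ starF f K ⊆ D))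
        (Finset.univ.filter (fun D : Finset (Fin m) => D.card = b + y ∧ starF f K' ⊆ D)) := by
    intro K _ K' _ hne
    rw [Finset.disjoint_left]
    intro D hD hD'
    rw [Finset.mem_filter] at hD hD'
    have h1 : starF f K ∪ starF f K' ⊆ D := Finset.union_subset hD.2.2 hD'.2.2
    have h2 := Finset.card_le_card h1
    have h3 := hun K K' hne
    omega
  have hcount : ∑ K : Option V,
      (Finset.univ.filter (fun D : Finset (Fin m) => D.card = b + y ∧ starF f K ⊆ D)).card
        ≤ uCount f (b + y) := by
    rw [uCount_eq_card]
    rw [← Finset.card_biUnion hdisj]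
    apply Finset.card_le_card
    rw [Finset.biUnion_subset]
    intro K _
    intro D hD
    rw [Finset.mem_filter] at hD
    rw [Finset.mem_filter]
    refine ⟨Finset.mem_univ _, hD.2.1, fun hdecD => hstar K ?_⟩
    apply decodEven_mono f _ hdecD
    rw [Set.compl_subset_compl]
    exact_mod_cast Finset.coe_subset.mpr hD.2.2
  -- computing the sum
  have hsum_g : ∑ K : Option V,
      (Finset.univ.filter (fun D : Finset (Fin m) => D.card = b + y ∧ starF f K ⊆ D)).card
        = A0 * Nat.choose (m - b) y + F1 * Nat.choose (m - b - 1) (y - 1) := by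
    rw [← Finset.sum_filter_add_sum_filter_not Finset.univ
      (fun K : Option V => (starF f K).card = b)]
    congr 1
    · calc ∑ K ∈ Finset.univ.filter (fun K : Option V => (starF f K).card = b),
            (Finset.univ.filter
              (fun D : Finset (Fin m) => D.card = b + y ∧ starF f K ⊆ D)).card
          = ∑ _K ∈ Finset.univ.filter (fun K : Option V => (starF f K).card = b),
            Nat.choose (m - b) y := by
            apply Finset.sum_congr rfl
            intro K hK
            rw [Finset.mem_filter] at hK
            rw [hgcard K, hK.2]
            have e2 : b + y - b = y := by omega
            rw [e2]
        _ = A0 * Nat.choose (m - b) y := by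
            rw [Finset.sum_const, smul_eq_mul, hA0]
    · have hcongr : Finset.univ.filter (fun K : Option V => ¬ (starF f K).card = b)
          = Finset.univ.filter (fun K : Option V => b + 1 ≤ (starF f K).card) := by
        apply Finset.filter_congr
        intro K _
        have h1 := hsb K
        constructor
        · intro h; omega
        · intro h; omega
      rw [hcongr]
      calc ∑ K ∈ Finset.univ.filter (fun K : Option V => b + 1 ≤ (starF f K).card),
            (Finset.univ.filter
              (fun D : Finset (Fin m) => D.card = b + y ∧ starF f K ⊆ D)).card
          = ∑ _K ∈ Finset.univ.filter (fun K : Option V => b + 1 ≤ (starF f K).card),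
            Nat.choose (m - b - 1) (y - 1) := by
            apply Finset.sum_congr rfl
            intro K hK
            rw [Finset.mem_filter] at hK
            have h1 := hsle K
            have h2 : (starF f K).card = b + 1 := by omega
            rw [hgcard K, h2]
            have e1 : m - (b + 1) = m - b - 1 := by omega
            have e2 : b + y - (b + 1) = y - 1 := by omega
            rw [e1, e2]
        _ = F1 * Nat.choose (m - b - 1) (y - 1) := by
            rw [Finset.sum_const, smul_eq_mul, hF1]
  -- final chain
  have hfinal : A0 * Nat.choose (m - b) y + F1 * Nat.choose (m - b - 1) (y - 1)
      ≤ uCount f (b + y) := hsum_g ▸ hcount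
  have hA0z : (A0 : ℤ) = θ + 1 := by rw [hA0U.1, hu]
  have hF1z : (F1 : ℤ) = (n : ℤ) - θ := by
    have h1 : (F1 : ℤ) = (SS : ℤ) := by exact_mod_cast hA0U.2
    rw [h1]
    have h2 : (uCount f b : ℤ) = (n : ℤ) + 1 - SS := hUz
    omega
  calc (θ + 1) * Nat.choose (m - b) y + ((n : ℤ) - θ) * Nat.choose (m - b - 1) (y - 1)
      = (A0 : ℤ) * Nat.choose (m - b) y + (F1 : ℤ) * Nat.choose (m - b - 1) (y - 1) := by
        rw [hA0z, hF1z]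
    _ = ((A0 * Nat.choose (m - b) y + F1 * Nat.choose (m - b - 1) (y - 1) : ℕ) : ℤ) := by
        push_cast; ring
    _ ≤ (uCount f (b + y) : ℤ) := by exact_mod_cast hfinal
end

section
/- Let f : Fin m → Sym2 V be a multigraph on a finite vertex set V. Then for all integers x, z ≥ 0 with x + z ≤ m, one has u_{x+z}·C(x+z, z) ≥ u_x·C(m−x, z). -/
lemma decod_mono {V ι : Type*} (f : ι → Sym2 V) {S S' : Set ι} (h : S' ⊆ S)
    (hd : DecodEven f S') : DecodEven f S := by
  intro v
  obtain ⟨w, hr, i, hi, hfi⟩ := hd v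
  refine ⟨w, ?_, i, h hi, hfi⟩
  refine hr.mono ?_
  intro a b hab
  rw [mGraph, SimpleGraph.fromRel_adj] at hab ⊢
  obtain ⟨hne, ⟨j, hj, hfj⟩ | ⟨j, hj, hfj⟩⟩ := hab
  · exact ⟨hne, Or.inl ⟨j, h hj, hfj⟩⟩
  · exact ⟨hne, Or.inr ⟨j, h hj, hfj⟩⟩

open Finset in
open scoped Classical in
lemma uCount_eq {V ι : Type*} [Fintype ι] (f : ι → Sym2 V) (x : ℕ) :
    uCount f x = (Finset.univ.filter
      (fun D : Finset ι => D.card = x ∧ ¬ DecodEven f ((↑D : Set ι)ᶜ))).card := by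
  rw [uCount, Nat.card_eq_fintype_card, Fintype.card_subtype]

open Finset in
open scoped Classical in
/-- For any multigraph `f` with `m` edges and all `x, z ≥ 0` with
`x + z ≤ m`: `u_{x+z}·C(x+z, z) ≥ u_x·C(m−x, z)`. -/
theorem uCount_binomial_monotone {V : Type*} [Fintype V] {m : ℕ} (f : Fin m → Sym2 V)
    (x z : ℕ) (hxz : x + z ≤ m) :
    uCount f x * Nat.choose (m - x) z ≤ uCount f (x + z) * Nat.choose (x + z) z := by
  rw [uCount_eq, uCount_eq]
  set s := Finset.univ.filter
      (fun D : Finset (Fin m) => D.card = x ∧ ¬ DecodEven f ((↑D : Set (Fin m))ᶜ)) with hs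
  set t := Finset.univ.filter
      (fun D : Finset (Fin m) => D.card = x + z ∧ ¬ DecodEven f ((↑D : Set (Fin m))ᶜ)) with ht
  refine Finset.card_mul_le_card_mul (fun D E => D ⊆ E) ?_ ?_
  · -- lower bound on supersets
    intro D hD
    rw [hs, mem_filter] at hD
    obtain ⟨-, hcard, hbad⟩ := hD
    -- supersets of D of size x+z within bad sets: all supersets of size x+z are bad
    have key : ∀ E : Finset (Fin m), D ⊆ E → E.card = x + z → E ∈ t.bipartiteAbove (· ⊆ ·) D := by
      intro E hDE hE
      rw [Finset.mem_bipartiteAbove, ht, mem_filter]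
      refine ⟨⟨mem_univ _, hE, fun hdec => hbad ?_⟩, hDE⟩
      exact decod_mono f (by simp [Set.compl_subset_compl, Finset.coe_subset, hDE]) hdec
    -- count: supersets of D of size x+z biject with z-subsets of Dᶜ
    have : ((Dᶜ).powersetCard z).card ≤ (t.bipartiteAbove (· ⊆ ·) D).card := by
      apply Finset.card_le_card_of_injOn (fun A => D ∪ A)
      · intro A hA
        rw [Finset.mem_coe, Finset.mem_powersetCard] at hA
        refine key _ Finset.subset_union_left ?_
        rw [Finset.card_union_of_disjoint, hcard, hA.2]
        exact Finset.disjoint_left.mpr fun a ha hA' => by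
          have := hA.1 hA'; simp at this; exact this ha
      · intro A hA B hB hAB
        rw [Finset.mem_coe, Finset.mem_powersetCard] at hA hB
        have h1 : Disjoint D A := Finset.disjoint_left.mpr fun a ha hA' => by
          have := hA.1 hA'; simp at this; exact this ha
        have h2 : Disjoint D B := Finset.disjoint_left.mpr fun a ha hB' => by
          have := hB.1 hB'; simp at this; exact this ha
        have : (D ∪ A) \ D = (D ∪ B) \ D := by simp only at hAB; rw [hAB]
        rwa [Finset.union_sdiff_cancel_left h1, Finset.union_sdiff_cancel_left h2] at this
    rw [Finset.card_powersetCard, Finset.card_compl, Fintype.card_fin, hcard] at this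
    exact this
  · -- upper bound on subsets
    intro E hE
    rw [ht, mem_filter] at hE
    obtain ⟨-, hcard, -⟩ := hE
    have : s.bipartiteBelow (· ⊆ ·) E ⊆ E.powersetCard x := by
      intro D hD
      rw [Finset.mem_bipartiteBelow] at hD
      rw [hs, mem_filter] at hD
      exact Finset.mem_powersetCard.mpr ⟨hD.2, hD.1.2.1⟩
    calc (s.bipartiteBelow (· ⊆ ·) E).card ≤ (E.powersetCard x).card := Finset.card_le_card this
      _ = Nat.choose (x + z) x := by rw [Finset.card_powersetCard, hcard]
      _ = Nat.choose (x + z) z := by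
          have := Nat.choose_symm (Nat.le_add_left z x)
          simpa using this
end
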